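/- Let n ≥ 1 be an integer. There exist a dimension v and a 2-divisible set of points S in PG(v−1,4) with |S| = n if and only if n ≥ 5. (Equivalently, a 2-divisible projective linear code over F_4 of effective length n exists if and only if n ≥ 5.) -/

import Mathlib

open Module Finset

noncomputable section
open scoped Classical

variable (F : Type) [Field F] [Fintype F]

instance finiteSubmodule (v : ℕ) : Finite (Submodule F (Fin v → F)) :=
  Finite.of_injective (fun s => (s : Set (Fin v → F))) SetLike.coe_injective

/-- The points of `PG(v-1,q)`: one-dimensional subspaces of `F_q^v`. -/
abbrev PGPoint (v : ℕ) := {W : Submodule F (Fin v → F) // finrank F W = 1}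

instance (v : ℕ) : Fintype (PGPoint F v) := Fintype.ofFinite _

/-- Cardinality of a multiset of points. -/
def mCard {v : ℕ} (M : PGPoint F v → ℕ) : ℕ := ∑ P, M P

/-- Multiplicity of a subspace: the sum of multiplicities over points contained in it. -/
def mVal {v : ℕ} (M : PGPoint F v → ℕ) (S : Submodule F (Fin v → F)) : ℕ :=
  ∑ P : PGPoint F v, if P.1 ≤ S then M P else 0

/-- A multiset of points is `Δ`-divisible if `#M ≡ M(H) (mod Δ)` for every hyperplane `H`. -/
def IsDivisibleMultiset {v : ℕ} (Δ : ℕ) (M : PGPoint F v → ℕ) : Prop :=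
  ∀ H : Submodule F (Fin v → F), finrank F H = v - 1 → mCard F M ≡ mVal F M H [MOD Δ]

/-- A set of points is `Δ`-divisible if `|S| ≡ |S ∩ H| (mod Δ)` for every hyperplane `H`. -/
def IsDivisibleSet {v : ℕ} (Δ : ℕ) (S : Set (PGPoint F v)) : Prop :=
  ∀ H : Submodule F (Fin v → F), finrank F H = v - 1 →
    S.ncard ≡ (S ∩ {P | P.1 ≤ H}).ncard [MOD Δ]

/-- A linear code `C ≤ F_q^m` is `Δ`-divisible if all Hamming weights are divisible by `Δ`. -/
def IsDivisibleCode {m : ℕ} (Δ : ℕ) (C : Submodule F (Fin m → F)) : Prop :=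
  ∀ c ∈ C, Δ ∣ hammingNorm c

/-- The effective length: the number of coordinates where some codeword is nonzero. -/
def effLength {m : ℕ} (C : Submodule F (Fin m → F)) : ℕ :=
  Nat.card {i : Fin m // ∃ c ∈ C, c i ≠ 0}

/-- `s_q(a,b,i)`, with `q = p^e`, written without division:
`s_q(a,b,0) = 1 + q + ⋯ + q^a` and `s_q(a,b,i) = p^{ie-b}·(1 + q + ⋯ + q^{a-i})` for `i ≥ 1`. -/
def sQ (p e a b i : ℕ) : ℕ :=
  if i = 0 then ∑ j ∈ Finset.range (a + 1), (p ^ e) ^ j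
  else p ^ (i * e - b) * ∑ j ∈ Finset.range (a - i + 1), (p ^ e) ^ j


/-- A good configuration of vectors. -/
structure GoodCfg (ι : Type) [Fintype ι] (v : ℕ) (x : ι → Fin v → F) : Prop where
  nz : ∀ i, x i ≠ 0
  np : ∀ i j : ι, (∃ c : F, c • x j = x i) → i = j
  par : ∀ a : Fin v → F,
    (Finset.univ.filter (fun i => (∑ j, x i j * a j) = 0)).card ≡ Fintype.card ι [MOD 2]

theorem hyperplane_eq_ker {v : ℕ} (hv : 1 ≤ v) (H : Submodule F (Fin v → F))
    (hH : finrank F H = v - 1) :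
    ∃ f : Module.Dual F (Fin v → F), f ≠ 0 ∧ H = LinearMap.ker f := by
  have hfr : finrank F (Fin v → F) = v := by
    simp [Module.finrank_pi]
  have hne : H ≠ ⊤ := by
    intro h
    rw [h, finrank_top, hfr] at hH
    omega
  obtain ⟨f, hf0, hmap⟩ := Submodule.exists_dual_map_eq_bot_of_lt_top
    (lt_top_iff_ne_top.2 hne) inferInstance
  have hle : H ≤ LinearMap.ker f := by
    intro x hx
    have : f x ∈ Submodule.map f H := Submodule.mem_map_of_mem hx
    rw [hmap] at this
    exact LinearMap.mem_ker.2 ((Submodule.mem_bot F).1 this)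
  refine ⟨f, hf0, ?_⟩
  have hrange : LinearMap.range f = ⊤ := by
    have hex : ∃ x, f x ≠ 0 := by
      by_contra hco
      push_neg at hco
      exact hf0 (LinearMap.ext fun y => by simp [hco y])
    rcases hex with ⟨x, hx⟩
    rw [Submodule.eq_top_iff']
    intro c
    exact ⟨(c / f x) • x, by simp [div_mul_cancel₀, hx]⟩
  have hker : finrank F (LinearMap.ker f) = v - 1 := by
    have := f.finrank_range_add_finrank_ker
    rw [hrange, finrank_top, hfr, Module.finrank_self] at this
    omega
  exact Submodule.eq_of_le_of_finrank_eq hle (by rw [hH, hker])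

theorem cfg_to_set {ι : Type} [Fintype ι] {v n : ℕ} (hv : 1 ≤ v) (x : ι → Fin v → F)
    (hc : GoodCfg F ι v x) (hn : Fintype.card ι = n) :
    ∃ S : Set (PGPoint F v), IsDivisibleSet F 2 S ∧ S.ncard = n := by
  set P : ι → PGPoint F v :=
    fun i => ⟨Submodule.span F {x i}, finrank_span_singleton (hc.nz i)⟩ with hP
  have hinj : Function.Injective P := by
    intro i j h
    apply hc.np
    have h' : Submodule.span F {x i} = Submodule.span F {x j} := congrArg Subtype.val h
    have : x i ∈ Submodule.span F {x j} := by
      rw [← h']; exact Submodule.mem_span_singleton_self _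
    rcases Submodule.mem_span_singleton.1 this with ⟨c, hcs⟩
    exact ⟨c, hcs⟩
  refine ⟨Set.range P, ?_, ?_⟩
  · intro H hH
    obtain ⟨f, hf0, rfl⟩ := hyperplane_eq_ker F hv H hH
    set a : Fin v → F := fun j => f (fun k => if j = k then 1 else 0) with ha
    have hfx : ∀ y : Fin v → F, f y = ∑ j, y j * a j := by
      intro y
      rw [LinearMap.pi_apply_eq_sum_univ f y]
      simp [ha, smul_eq_mul]
    have hint : Set.range P ∩ {Q : PGPoint F v | Q.1 ≤ LinearMap.ker f}
        = P '' {i | f (x i) = 0} := by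
      ext Q
      constructor
      · rintro ⟨⟨i, rfl⟩, hQ⟩
        refine ⟨i, ?_, rfl⟩
        have : x i ∈ LinearMap.ker f := hQ (Submodule.mem_span_singleton_self _)
        simpa using this
      · rintro ⟨i, hi, rfl⟩
        refine ⟨⟨i, rfl⟩, ?_⟩
        simp only [Set.mem_setOf_eq, hP]
        rw [Submodule.span_le]
        intro y hy
        rcases Set.mem_singleton_iff.1 hy with rfl
        simpa using hi
    rw [hint]
    have h1 : (Set.range P).ncard = Fintype.card ι := by
      rw [← Set.image_univ, Set.ncard_image_of_injective _ hinj, Set.ncard_univ, Nat.card_eq_fintype_card]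
    have h2 : (P '' {i | f (x i) = 0}).ncard
        = (Finset.univ.filter (fun i => (∑ j, x i j * a j) = 0)).card := by
      rw [Set.ncard_image_of_injective _ hinj]
      rw [Set.ncard_eq_toFinset_card']
      congr 1
      ext i
      simp [hfx]
    rw [h1, h2]
    exact (hc.par a).symm
  · rw [← Set.image_univ, Set.ncard_image_of_injective _ hinj, Set.ncard_univ,
      Nat.card_eq_fintype_card, hn]


/-- Existence of a good configuration of size `n`. -/
def HasCfg (n : ℕ) : Prop :=
  ∃ (v : ℕ) (ι : Type) (_ : Fintype ι) (x : ι → Fin v → F),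
    1 ≤ v ∧ Fintype.card ι = n ∧ GoodCfg F ι v x

theorem cfg_sum {ι κ : Type} [Fintype ι] [Fintype κ] {v w : ℕ}
    (x : ι → Fin v → F) (y : κ → Fin w → F)
    (hx : GoodCfg F ι v x) (hy : GoodCfg F κ w y) :
    GoodCfg F (ι ⊕ κ) (v + w)
      (Sum.elim (fun i => Fin.append (x i) (0 : Fin w → F))
                (fun j => Fin.append (0 : Fin v → F) (y j))) := by
  constructor
  · rintro (i | j) h
    · apply hx.nz i
      funext k
      have := congrFun h (Fin.castAdd w k)
      simpa using this
    · apply hy.nz j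
      funext k
      have := congrFun h (Fin.natAdd v k)
      simpa using this
  · rintro (i | j) (i' | j') ⟨c, hc⟩
    · have : c • x i' = x i := by
        funext k
        have := congrFun hc (Fin.castAdd w k)
        simpa using this
      exact congrArg Sum.inl (hx.np i i' ⟨c, this⟩)
    · exfalso
      apply hx.nz i
      funext k
      have := congrFun hc (Fin.castAdd w k)
      simpa using this.symm
    · exfalso
      apply hy.nz j
      funext k
      have := congrFun hc (Fin.natAdd v k)
      simpa using this.symm
    · have : c • y j' = y j := by
        funext k
        have := congrFun hc (Fin.natAdd v k)
        simpa using this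
      exact congrArg Sum.inr (hy.np j j' ⟨c, this⟩)
  · intro a
    have key : ∀ s : ι ⊕ κ,
        (∑ j, Sum.elim (fun i => Fin.append (x i) (0 : Fin w → F))
          (fun j => Fin.append (0 : Fin v → F) (y j)) s j * a j)
        = Sum.elim (fun i => ∑ k, x i k * a (Fin.castAdd w k))
            (fun j => ∑ k, y j k * a (Fin.natAdd v k)) s := by
      rintro (i | j) <;>
      · rw [Fin.sum_univ_add] <;> simp
    have hsplit :
        (Finset.univ.filter (fun s : ι ⊕ κ =>
          (∑ j, Sum.elim (fun i => Fin.append (x i) (0 : Fin w → F))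
            (fun j => Fin.append (0 : Fin v → F) (y j)) s j * a j) = 0)).card
        = (Finset.univ.filter (fun i : ι => (∑ k, x i k * a (Fin.castAdd w k)) = 0)).card
          + (Finset.univ.filter (fun j : κ => (∑ k, y j k * a (Fin.natAdd v k)) = 0)).card := by
      rw [Finset.card_filter, Finset.card_filter, Finset.card_filter, Fintype.sum_sum_type]
      congr 1 <;> apply Finset.sum_congr rfl <;> intro s _ <;> rw [key] <;> simp <;> congr
    rw [hsplit, Fintype.card_sum]
    exact Nat.ModEq.add (hx.par _) (hy.par _)

theorem hasCfg_add {m k : ℕ} (hm : HasCfg F m) (hk : HasCfg F k) : HasCfg F (m + k) := by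
  obtain ⟨v, ι, _, x, hv, hcard, hx⟩ := hm
  obtain ⟨w, κ, _, y, hw, hcard', hy⟩ := hk
  exact ⟨v + w, ι ⊕ κ, inferInstance, _, by omega,
    by rw [Fintype.card_sum, hcard, hcard'], cfg_sum F x y hx hy⟩


theorem ringChar_eq_two_of_card (hF : Fintype.card F = 4) : ringChar F = 2 := by
  set p := ringChar F with hp
  have hprime : p.Prime := CharP.char_is_prime F p
  obtain ⟨n, hn⟩ := FiniteField.card F p
  have hdvd : p ∣ 4 := by
    rw [← hF, hn.2]
    exact dvd_pow_self p n.ne_zero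
  have hle : p ≤ 4 := Nat.le_of_dvd (by norm_num) hdvd
  have h2 : 2 ≤ p := hprime.two_le
  interval_cases p
  · rfl
  · exact absurd hdvd (by decide)
  · exact absurd hprime (by decide)

theorem two_eq_zero_of_card (hF : Fintype.card F = 4) : (2 : F) = 0 := by
  set p := ringChar F with hp
  have hprime : p.Prime := CharP.char_is_prime F p
  obtain ⟨n, hn⟩ := FiniteField.card F p
  have hdvd : p ∣ 4 := by
    rw [← hF, hn.2]
    exact dvd_pow_self p n.ne_zero
  have hle : p ≤ 4 := Nat.le_of_dvd (by norm_num) hdvd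
  have h2 : 2 ≤ p := hprime.two_le
  have hp2 : p = 2 := by
    interval_cases p
    · rfl
    · exact absurd hdvd (by decide)
    · exact absurd hprime (by decide)
  have : (p : F) = 0 := CharP.cast_eq_zero F p
  rw [hp2] at this
  exact_mod_cast this

theorem add_self_eq_zero_of_card (hF : Fintype.card F = 4) (t : F) : t + t = 0 := by
  rw [← two_mul, two_eq_zero_of_card F hF, zero_mul]

theorem even_card_of_invol {α : Type} [DecidableEq α] (σ : α → α)
    (h2 : ∀ a, σ (σ a) = a) :
    ∀ s : Finset α, (∀ a ∈ s, σ a ≠ a) → (∀ a ∈ s, σ a ∈ s) → Even s.card := by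
  intro s
  induction s using Finset.strongInduction with
  | _ s ih =>
    intro hfix hmem
    rcases s.eq_empty_or_nonempty with rfl | ⟨a, ha⟩
    · simp
    · have hσa : σ a ∈ s := hmem a ha
      have hne : σ a ≠ a := hfix a ha
      set t := (s.erase a).erase (σ a) with ht
      have hsub : t ⊆ s := (Finset.erase_subset _ _).trans (Finset.erase_subset _ _)
      have hats : a ∉ t := by simp [ht]
      have hts : t ⊂ s := (Finset.ssubset_iff_of_subset hsub).2 ⟨a, ha, hats⟩
      have hmem1 : σ a ∈ s.erase a := Finset.mem_erase.2 ⟨hne, hσa⟩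
      have hc1 : (s.erase a).card = s.card - 1 := Finset.card_erase_of_mem ha
      have hc2 : t.card = (s.erase a).card - 1 := Finset.card_erase_of_mem hmem1
      have hpos : 0 < (s.erase a).card := Finset.card_pos.2 ⟨σ a, hmem1⟩
      have hpos' : 0 < s.card := Finset.card_pos.2 ⟨a, ha⟩
      have hinj : Function.Injective σ := Function.LeftInverse.injective h2
      have heven : Even t.card := by
        apply ih t hts
        · intro b hb; exact hfix b (hsub hb)
        · intro b hb
          have hbs : b ∈ s := hsub hb
          rcases Finset.mem_erase.1 hb with ⟨hbσa, hb'⟩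
          rcases Finset.mem_erase.1 hb' with ⟨hba, _⟩
          refine Finset.mem_erase.2 ⟨?_, Finset.mem_erase.2 ⟨?_, hmem b hbs⟩⟩
          · intro h; exact hba (hinj h)
          · intro h; exact hbσa (by rw [← h2 b, h])
      rcases heven with ⟨k, hk⟩
      refine ⟨k + 1, ?_⟩
      omega

theorem count_affine (u w : F) :
    (Finset.univ.filter (fun t : F => u + t * w = 0)).card
      = if w = 0 then (if u = 0 then Fintype.card F else 0) else 1 := by
  rcases eq_or_ne w 0 with rfl | hw
  · rcases eq_or_ne u 0 with rfl | hu
    · simp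
    · simp [hu]
  · simp only [if_neg hw]
    rw [Finset.card_eq_one]
    refine ⟨-u / w, ?_⟩
    ext t
    simp only [Finset.mem_filter, Finset.mem_univ, true_and, Finset.mem_singleton]
    constructor
    · intro h
      rw [eq_div_iff hw]
      linear_combination h
    · rintro rfl
      field_simp
      ring

theorem count_affine_ne (u w : F) :
    (Finset.univ.filter (fun t : F => t ≠ 0 ∧ u + t * w = 0)).card
      = if w = 0 then (if u = 0 then Fintype.card F - 1 else 0)
        else (if u = 0 then 0 else 1) := by
  rcases eq_or_ne w 0 with rfl | hw
  · rcases eq_or_ne u 0 with rfl | hu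
    · simp only [if_pos rfl]
      have : (Finset.univ.filter (fun t : F => t ≠ 0 ∧ (0:F) + t * 0 = 0))
          = Finset.univ.erase 0 := by
        ext t; simp [Finset.mem_erase]
      rw [this, Finset.card_erase_of_mem (Finset.mem_univ _), Finset.card_univ]
      simp
    · simp [hu]
  · rcases eq_or_ne u 0 with rfl | hu
    · have he : (Finset.univ.filter (fun t : F => t ≠ 0 ∧ (0:F) + t * w = 0)) = ∅ := by
        ext t
        simp only [Finset.mem_filter, Finset.notMem_empty, iff_false, Finset.mem_univ, true_and,
          not_and]
        intro ht h
        exact ht (by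
          have h3 : t * w = 0 := by linear_combination h
          rcases mul_eq_zero.1 h3 with h' | h'
          · exact h'
          · exact absurd h' hw)
      rw [he]
      simp [hw]
    · simp only [if_neg hw, if_neg hu]
      rw [Finset.card_eq_one]
      refine ⟨-u / w, ?_⟩
      ext t
      simp only [Finset.mem_filter, Finset.mem_univ, true_and, Finset.mem_singleton]
      constructor
      · rintro ⟨ht, h⟩
        rw [eq_div_iff hw]
        linear_combination h
      · rintro rfl
        constructor
        · exact div_ne_zero (neg_ne_zero.2 hu) hw
        · field_simp
          ring

theorem count_sq (hF : Fintype.card F = 4) (u w : F) (hw : w ≠ 0) :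
    (Finset.univ.filter (fun t : F => u + t * t * w = 0)).card = 1 := by
  have hadd := add_self_eq_zero_of_card F hF
  have hinj : Function.Injective (fun t : F => t * t) := by
    intro t s h
    simp only at h
    have hts : (t + s) * (t + s) = 0 := by
      have : t * s + t * s = 0 := hadd _
      linear_combination h + this + hadd (s * s)
    have : t + s = 0 := by
      rcases mul_eq_zero.1 hts with h' | h'
      · exact h'
      · exact h'
    have hs : s + s = 0 := hadd s
    linear_combination this - hs
  have hsurj : Function.Surjective (fun t : F => t * t) :=
    Finite.surjective_of_injective hinj
  obtain ⟨t0, ht0⟩ := hsurj (-u / w)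
  have ht0' : t0 * t0 = -u / w := ht0
  rw [Finset.card_eq_one]
  refine ⟨t0, ?_⟩
  ext t
  simp only [Finset.mem_filter, Finset.mem_univ, true_and, Finset.mem_singleton]
  constructor
  · intro h
    apply hinj
    show t * t = t0 * t0
    rw [ht0', eq_div_iff hw]
    linear_combination h
  · intro h
    rw [h]
    have hh : t0 * t0 * w = -u := by
      rw [ht0']; field_simp
    linear_combination hh


theorem hasCfg_five (hF : Fintype.card F = 4) : HasCfg F 5 := by
  classical
  set x : Unit ⊕ F → Fin 2 → F :=
    Sum.elim (fun _ => ![0, 1]) (fun t => ![1, t]) with hx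
  refine ⟨2, Unit ⊕ F, inferInstance, x, by norm_num, by simp [hF], ?_, ?_, ?_⟩
  · rintro (u | t) h
    · have := congrFun h 1; simp [hx] at this
    · have := congrFun h 0; simp [hx] at this
  · rintro (u | t) (u' | t') ⟨c, hc⟩
    · exact congrArg Sum.inl (Subsingleton.elim _ _)
    · exfalso
      have h0 := congrFun hc 0
      simp [hx] at h0
      have h1 := congrFun hc 1
      rw [h0] at h1
      simp [hx] at h1
    · exfalso
      have h0 := congrFun hc 0
      simp [hx] at h0
    · have h0 := congrFun hc 0
      simp [hx] at h0
      have h1 := congrFun hc 1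
      rw [h0] at h1
      simp [hx] at h1
      rw [h1]
  · intro a
    have hcard : Fintype.card (Unit ⊕ F) = 5 := by simp [hF]
    rw [hcard, Finset.card_filter, Fintype.sum_sum_type]
    have e0 : (∑ j, x (Sum.inl ()) j * a j) = a 1 := by
      simp [hx, Fin.sum_univ_two]
    have e1 : ∀ t : F, (∑ j, x (Sum.inr t) j * a j) = a 0 + t * a 1 := by
      intro t; simp [hx, Fin.sum_univ_two]
    simp only [e0, e1]
    rw [Finset.sum_const, ← Finset.card_filter, count_affine]
    simp only [Finset.card_univ, Fintype.card_unit, one_smul, hF]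
    rcases eq_or_ne (a 1) 0 with h1 | h1 <;> rcases eq_or_ne (a 0) 0 with h0 | h0 <;>
      simp only [if_pos, if_neg, h0, h1, if_true, if_false, ite_true, ite_false] <;>
      simp [h0, h1] <;> decide

theorem hasCfg_six (hF : Fintype.card F = 4) : HasCfg F 6 := by
  classical
  have hadd := add_self_eq_zero_of_card F hF
  set x : Fin 2 ⊕ F → Fin 3 → F :=
    Sum.elim (fun i => if i = 0 then ![0, 1, 0] else ![0, 0, 1]) (fun t => ![1, t, t * t])
    with hx
  refine ⟨3, Fin 2 ⊕ F, inferInstance, x, by norm_num, by simp [hF], ?_, ?_, ?_⟩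
  · rintro (i | t) h
    · rcases eq_or_ne i 0 with rfl | hi
      · have := congrFun h 1; simp [hx] at this
      · have := congrFun h 2; simp [hx, hi] at this
    · have := congrFun h 0; simp [hx] at this
  · rintro (i | t) (i' | t') ⟨c, hc⟩
    · rcases eq_or_ne i 0 with rfl | hi <;> rcases eq_or_ne i' 0 with rfl | hi'
      · rfl
      · exfalso
        have h1 := congrFun hc 1
        simp [hx, hi'] at h1
      · exfalso
        have h2 := congrFun hc 2
        simp [hx, hi] at h2
      · congr 1
        omega
    · exfalso
      rcases eq_or_ne i 0 with rfl | hi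
      · have h0 := congrFun hc 0
        simp [hx] at h0
        have h1 := congrFun hc 1
        rw [h0] at h1
        simp [hx] at h1
      · have h0 := congrFun hc 0
        simp [hx, hi] at h0
        have h2 := congrFun hc 2
        rw [h0] at h2
        simp [hx, hi] at h2
    · exfalso
      rcases eq_or_ne i' 0 with rfl | hi'
      · have h0 := congrFun hc 0
        simp [hx] at h0
      · have h0 := congrFun hc 0
        simp [hx, hi'] at h0
    · have h0 := congrFun hc 0
      simp [hx] at h0
      have h1 := congrFun hc 1
      rw [h0] at h1
      simp [hx] at h1
      rw [h1]
  · intro a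
    have hcard : Fintype.card (Fin 2 ⊕ F) = 6 := by simp [hF]
    rw [hcard, Finset.card_filter, Fintype.sum_sum_type]
    have e1 : ∀ t : F, (∑ j, x (Sum.inr t) j * a j) = a 0 + t * a 1 + t * t * a 2 := by
      intro t; simp [hx, Fin.sum_univ_three]
    have e00 : (∑ j, x (Sum.inl 0) j * a j) = a 1 := by
      simp [hx, Fin.sum_univ_three]
    have e01 : (∑ j, x (Sum.inl 1) j * a j) = a 2 := by
      simp [hx, Fin.sum_univ_three]
    rw [Fin.sum_univ_two]
    simp only [e00, e01, e1]
    rw [← Finset.card_filter]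
    rcases eq_or_ne (a 2) 0 with h2 | h2
    · have hc2 : (Finset.univ.filter (fun t : F => a 0 + t * a 1 + t * t * a 2 = 0)).card
          = (Finset.univ.filter (fun t : F => a 0 + t * a 1 = 0)).card := by
        congr 1; ext t; simp [h2]
      rw [hc2, count_affine]
      rcases eq_or_ne (a 1) 0 with h1 | h1 <;> rcases eq_or_ne (a 0) 0 with h0 | h0 <;>
        simp [h0, h1, h2, hF] <;> decide
    · rcases eq_or_ne (a 1) 0 with h1 | h1
      · have hc1 : (Finset.univ.filter (fun t : F => a 0 + t * a 1 + t * t * a 2 = 0)).card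
            = (Finset.univ.filter (fun t : F => a 0 + t * t * a 2 = 0)).card := by
          congr 1; ext t; simp [h1]
        rw [hc1, count_sq F hF _ _ h2]
        rw [if_pos h1, if_neg h2]
        decide
      · have hinv : Even (Finset.univ.filter
            (fun t : F => a 0 + t * a 1 + t * t * a 2 = 0)).card := by
          set hq : F := a 1 / a 2 with hhq
          have hha : hq * a 2 = a 1 := div_mul_cancel₀ _ h2
          have hk : hq * hq * a 2 + hq * a 1 = 0 := by
            rw [mul_assoc hq hq (a 2), hha]
            exact hadd (hq * a 1)
          apply even_card_of_invol (fun t => t + hq)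
          · intro t
            show t + hq + hq = t
            linear_combination hadd hq
          · intro t _
            show t + hq ≠ t
            intro hcon
            exact (div_ne_zero h1 h2) (by linear_combination hcon)
          · intro t ht
            simp only [Finset.mem_filter, Finset.mem_univ, true_and] at ht
            show t + hq ∈ Finset.univ.filter (fun t : F => a 0 + t * a 1 + t * t * a 2 = 0)
            simp only [Finset.mem_filter, Finset.mem_univ, true_and]
            linear_combination ht + hadd (t * (hq * a 2)) + hk
        rcases hinv with ⟨k, hk⟩
        simp only [if_neg h1, if_neg h2, hk]
        show (0 + 0 + (k + k)) % 2 = 6 % 2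
        omega

theorem card_filter_subtype {α : Type} [Fintype α] (p q : α → Prop)
    {st : Fintype {a // p a}}
    {d1 : DecidablePred (fun x : {a // p a} => q x.1)}
    {d2 : DecidablePred (fun a => p a ∧ q a)} :
    (@Finset.filter _ (fun x : {a // p a} => q x.1) d1 (@Finset.univ _ st)).card
      = (@Finset.filter _ (fun a => p a ∧ q a) d2 Finset.univ).card := by
  apply Finset.card_nbij (fun x => x.1)
  · intro x hx
    simp only [Finset.mem_coe, Finset.mem_filter, Finset.mem_univ, true_and] at hx ⊢
    exact ⟨x.2, hx⟩
  · intro x _ y _ hxy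
    exact Subtype.ext hxy
  · intro b hb
    simp only [Finset.coe_filter, Set.mem_setOf_eq, Finset.mem_univ, true_and] at hb
    refine ⟨⟨b, hb.1⟩, ?_, rfl⟩
    simp only [Finset.coe_filter, Set.mem_setOf_eq, Finset.mem_univ, true_and]
    exact hb.2

theorem card_ne_zero_subtype (hF : Fintype.card F = 4) :
    Fintype.card {t : F // t ≠ 0} = 3 := by
  rw [Fintype.card_subtype]
  have : (Finset.univ.filter (fun t : F => t ≠ 0)) = Finset.univ.erase 0 := by
    ext t; simp [Finset.mem_erase]
  rw [this, Finset.card_erase_of_mem (Finset.mem_univ _), Finset.card_univ, hF]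



theorem hasCfg_seven (hF : Fintype.card F = 4) : HasCfg F 7 := by
  classical
  haveI hchar : CharP F 2 := ringChar_eq_two_of_card F hF ▸ ringChar.charP F
  set cc : ZMod 2 →+* F := ZMod.castHom (dvd_refl 2) F with hcc
  have hccinj : Function.Injective cc := cc.injective
  have hzm : ∀ w : ZMod 2, w ≠ 0 → w = 1 := by decide
  have hcube : Fintype.card (Fin 3 → ZMod 2) = 8 := by simp
  set x : {z : Fin 3 → ZMod 2 // z ≠ 0} → Fin 3 → F := fun z j => cc (z.1 j) with hx
  have hcard : Fintype.card {z : Fin 3 → ZMod 2 // z ≠ 0} = 7 := by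
    rw [Fintype.card_subtype]
    have : (Finset.univ.filter (fun z : Fin 3 → ZMod 2 => z ≠ 0)) = Finset.univ.erase 0 := by
      ext z; simp [Finset.mem_erase]
    rw [this, Finset.card_erase_of_mem (Finset.mem_univ _), Finset.card_univ, hcube]
  refine ⟨3, {z : Fin 3 → ZMod 2 // z ≠ 0}, inferInstance, x, by norm_num, hcard, ?_, ?_, ?_⟩
  · intro z h
    apply z.2
    funext j
    have := congrFun h j
    simp only [hx, Pi.zero_apply] at this ⊢
    exact hccinj (by simpa using this)
  · rintro z z' ⟨c, hc⟩
    obtain ⟨j0, hj0⟩ : ∃ j0, z'.1 j0 ≠ 0 := by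
      by_contra hco; push_neg at hco
      exact z'.2 (funext hco)
    have hj1 : z'.1 j0 = 1 := hzm _ hj0
    have hcval : c = cc (z.1 j0) := by
      have := congrFun hc j0
      simpa [hx, hj1] using this
    have hz0 : z.1 j0 ≠ 0 := by
      intro hz
      apply z.2
      funext j
      have := congrFun hc j
      rw [hcval, hz] at this
      simp only [hx, Pi.smul_apply, smul_eq_mul, map_zero, zero_mul] at this
      exact hccinj (by simpa using this.symm)
    have hz1 : z.1 j0 = 1 := hzm _ hz0
    apply Subtype.ext
    funext j
    have := congrFun hc j
    rw [hcval, hz1] at this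
    simp only [hx, Pi.smul_apply, smul_eq_mul, map_one, one_mul] at this
    exact (hccinj this).symm
  · intro a
    set L : (Fin 3 → ZMod 2) → F := fun z => ∑ j, cc (z j) * a j with hL
    have hLadd : ∀ z w, L (z + w) = L z + L w := by
      intro z w
      simp only [hL, Pi.add_apply, map_add, add_mul]
      rw [Finset.sum_add_distrib]
    have hL0 : L 0 = 0 := by simp [hL]
    obtain ⟨z₁, z₂, hne, heq⟩ := Fintype.exists_ne_map_eq_of_card_lt L (by rw [hcube, hF]; norm_num)
    set u : Fin 3 → ZMod 2 := z₁ + z₂ with hu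
    have haddself : ∀ z : Fin 3 → ZMod 2, z + z = 0 := by
      intro z; funext j; simp only [Pi.add_apply, Pi.zero_apply]
      revert j; intro j; exact (by decide : ∀ w : ZMod 2, w + w = 0) (z j)
    have hu0 : u ≠ 0 := by
      intro h
      rw [hu] at h
      have hneg : -z₂ = z₂ := by
        funext j; exact (by decide : ∀ w : ZMod 2, -w = w) (z₂ j)
      exact hne ((eq_neg_of_add_eq_zero_left h).trans hneg)
    have hLu : L u = 0 := by
      rw [hu, hLadd, heq, ← hLadd, haddself, hL0]
    have hEven : Even (Finset.univ.filter (fun z : Fin 3 → ZMod 2 => L z = 0)).card := by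
      apply even_card_of_invol (fun z => z + u)
      · intro z; rw [add_assoc, haddself, add_zero]
      · intro z _
        intro h
        exact hu0 (by rwa [add_eq_left] at h)
      · intro z hz
        simp only [Finset.mem_filter, Finset.mem_univ, true_and] at hz ⊢
        rw [hLadd, hz, hLu, add_zero]
    have hqeq : ∀ z : {z : Fin 3 → ZMod 2 // z ≠ 0},
        ((∑ j, x z j * a j) = 0) = (L z.1 = 0) := by
      intro z; rfl
    have hcard2 : (Finset.univ.filter (fun z : {z : Fin 3 → ZMod 2 // z ≠ 0} =>
        (∑ j, x z j * a j) = 0)).card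
        = (Finset.univ.filter (fun z : Fin 3 → ZMod 2 => z ≠ 0 ∧ L z = 0)).card :=
      card_filter_subtype (fun z : Fin 3 → ZMod 2 => z ≠ 0) (fun z => L z = 0)
    have hsplit : (Finset.univ.filter (fun z : Fin 3 → ZMod 2 => L z = 0)).card
        = (Finset.univ.filter (fun z : Fin 3 → ZMod 2 => z ≠ 0 ∧ L z = 0)).card + 1 := by
      have h1 : (Finset.univ.filter (fun z : Fin 3 → ZMod 2 => z ≠ 0 ∧ L z = 0))
          = (Finset.univ.filter (fun z : Fin 3 → ZMod 2 => L z = 0)).erase 0 := by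
        ext z
        simp [Finset.mem_erase, and_comm]
      have h0mem : (0 : Fin 3 → ZMod 2) ∈ Finset.univ.filter
          (fun z : Fin 3 → ZMod 2 => L z = 0) := by
        simp [hL0]
      rw [h1, Finset.card_erase_of_mem h0mem]
      have := Finset.card_pos.2 ⟨_, h0mem⟩
      omega
    rw [hcard, hcard2]
    rcases hEven with ⟨k, hk⟩
    rw [hk] at hsplit
    show _ % 2 = 7 % 2
    omega

theorem hasCfg_eight (hF : Fintype.card F = 4) : HasCfg F 8 := by
  classical
  haveI hchar : CharP F 2 := ringChar_eq_two_of_card F hF ▸ ringChar.charP F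
  set cc : ZMod 2 →+* F := ZMod.castHom (dvd_refl 2) F with hcc
  have hccinj : Function.Injective cc := cc.injective
  have hcube : Fintype.card (Fin 3 → ZMod 2) = 8 := by simp
  set x : (Fin 3 → ZMod 2) → Fin 4 → F :=
    fun z => ![1, cc (z 0), cc (z 1), cc (z 2)] with hx
  refine ⟨4, Fin 3 → ZMod 2, inferInstance, x, by norm_num, hcube, ?_, ?_, ?_⟩
  · intro z h
    have := congrFun h 0
    simp [hx] at this
  · rintro z z' ⟨c, hc⟩
    have h0 := congrFun hc 0
    simp [hx] at h0
    funext j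
    have hj : ∀ k : Fin 3, cc (z' k) = cc (z k) := by
      intro k
      fin_cases k
      · have := congrFun hc 1; rw [h0] at this; simpa [hx] using this
      · have := congrFun hc 2; rw [h0] at this; simpa [hx] using this
      · have := congrFun hc 3; rw [h0] at this; simpa [hx] using this
    exact (hccinj (hj j)).symm
  · intro a
    set L : (Fin 3 → ZMod 2) → F := fun z => ∑ j, cc (z j) * a j.succ with hL
    have hLadd : ∀ z w, L (z + w) = L z + L w := by
      intro z w
      simp only [hL, Pi.add_apply, map_add, add_mul]
      rw [Finset.sum_add_distrib]
    have hL0 : L 0 = 0 := by simp [hL]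
    obtain ⟨z₁, z₂, hne, heq⟩ := Fintype.exists_ne_map_eq_of_card_lt L (by rw [hcube, hF]; norm_num)
    set u : Fin 3 → ZMod 2 := z₁ + z₂ with hu
    have haddself : ∀ z : Fin 3 → ZMod 2, z + z = 0 := by
      intro z; funext j; exact (by decide : ∀ w : ZMod 2, w + w = 0) (z j)
    have hu0 : u ≠ 0 := by
      intro h
      rw [hu] at h
      have hneg : -z₂ = z₂ := by
        funext j; exact (by decide : ∀ w : ZMod 2, -w = w) (z₂ j)
      exact hne ((eq_neg_of_add_eq_zero_left h).trans hneg)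
    have hLu : L u = 0 := by
      rw [hu, hLadd, heq, ← hLadd, haddself, hL0]
    have hxsum : ∀ z : Fin 3 → ZMod 2, (∑ j, x z j * a j) = a 0 + L z := by
      intro z
      rw [Fin.sum_univ_four]
      simp only [hx, hL, Fin.sum_univ_three]
      simp [Fin.succ]
      ring
    have hEven : Even (Finset.univ.filter
        (fun z : Fin 3 → ZMod 2 => (∑ j, x z j * a j) = 0)).card := by
      apply even_card_of_invol (fun z => z + u)
      · intro z; rw [add_assoc, haddself, add_zero]
      · intro z _
        intro h
        exact hu0 (by rwa [add_eq_left] at h)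
      · intro z hz
        simp only [Finset.mem_filter, Finset.mem_univ, true_and] at hz ⊢
        rw [hxsum] at hz ⊢
        rw [hLadd, hLu, add_zero]
        exact hz
    rw [hcube]
    rcases hEven with ⟨k, hk⟩
    rw [hk]
    show _ % 2 = 8 % 2
    omega

theorem hasCfg_nine (hF : Fintype.card F = 4) : HasCfg F 9 := by
  classical
  set x : Fin 3 × {t : F // t ≠ 0} → Fin 3 → F :=
    fun p => ![![1, p.2.1, 0], ![0, 1, p.2.1], ![p.2.1, 0, 1]] p.1 with hx
  have hcard : Fintype.card (Fin 3 × {t : F // t ≠ 0}) = 9 := by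
    rw [Fintype.card_prod, card_ne_zero_subtype F hF]
    simp
  refine ⟨3, Fin 3 × {t : F // t ≠ 0}, inferInstance, x, by norm_num, hcard, ?_, ?_, ?_⟩
  · rintro ⟨i, t⟩ h
    fin_cases i
    · have := congrFun h 0; simp [hx] at this
    · have := congrFun h 1; simp [hx] at this
    · have := congrFun h 2; simp [hx] at this
  · rintro ⟨i, t⟩ ⟨i', t'⟩ ⟨c, hc⟩
    fin_cases i <;> fin_cases i'
    · have h0 := congrFun hc 0
      simp [hx] at h0
      have h1 := congrFun hc 1
      rw [h0] at h1
      simp [hx] at h1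
      have ht : t = t' := Subtype.ext h1.symm
      rw [ht]
    · exfalso
      have h0 := congrFun hc 0
      simp [hx] at h0
    · exfalso
      have h2 := congrFun hc 2
      simp [hx] at h2
      have h0 := congrFun hc 0
      rw [h2] at h0
      simp [hx] at h0
    · exfalso
      have h0 := congrFun hc 0
      simp [hx] at h0
      have h1 := congrFun hc 1
      rw [h0] at h1
      simp [hx] at h1
    · have h1 := congrFun hc 1
      simp [hx] at h1
      have h2 := congrFun hc 2
      rw [h1] at h2
      simp [hx] at h2
      have ht : t = t' := Subtype.ext h2.symm
      rw [ht]
    · exfalso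
      have h1 := congrFun hc 1
      simp [hx] at h1
    · exfalso
      have h2 := congrFun hc 2
      simp [hx] at h2
    · exfalso
      have h1 := congrFun hc 1
      simp [hx] at h1
      have h2 := congrFun hc 2
      rw [h1] at h2
      simp [hx] at h2
    · have h2 := congrFun hc 2
      simp [hx] at h2
      have h0 := congrFun hc 0
      rw [h2] at h0
      simp [hx] at h0
      have ht : t = t' := Subtype.ext h0.symm
      rw [ht]
  · intro a
    have e0 : ∀ t : {t : F // t ≠ 0}, (∑ j, x (0, t) j * a j) = a 0 + t.1 * a 1 := by
      intro t; simp [hx, Fin.sum_univ_three]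
    have e1 : ∀ t : {t : F // t ≠ 0}, (∑ j, x (1, t) j * a j) = a 1 + t.1 * a 2 := by
      intro t; simp [hx, Fin.sum_univ_three]; try ring
    have e2 : ∀ t : {t : F // t ≠ 0}, (∑ j, x (2, t) j * a j) = a 2 + t.1 * a 0 := by
      intro t; simp [hx, Fin.sum_univ_three]; try ring
    rw [hcard, Finset.card_filter, Fintype.sum_prod_type, Fin.sum_univ_three]
    simp only [e0, e1, e2]
    rw [← Finset.card_filter, ← Finset.card_filter, ← Finset.card_filter]
    rw [show (Finset.univ.filter (fun t : {t : F // t ≠ 0} => a 0 + t.1 * a 1 = 0)).card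
        = (Finset.univ.filter (fun t : F => t ≠ 0 ∧ a 0 + t * a 1 = 0)).card from
        card_filter_subtype (fun t : F => t ≠ 0) (fun t => a 0 + t * a 1 = 0),
      show (Finset.univ.filter (fun t : {t : F // t ≠ 0} => a 1 + t.1 * a 2 = 0)).card
        = (Finset.univ.filter (fun t : F => t ≠ 0 ∧ a 1 + t * a 2 = 0)).card from
        card_filter_subtype (fun t : F => t ≠ 0) (fun t => a 1 + t * a 2 = 0),
      show (Finset.univ.filter (fun t : {t : F // t ≠ 0} => a 2 + t.1 * a 0 = 0)).card
        = (Finset.univ.filter (fun t : F => t ≠ 0 ∧ a 2 + t * a 0 = 0)).card from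
        card_filter_subtype (fun t : F => t ≠ 0) (fun t => a 2 + t * a 0 = 0)]
    rw [count_affine_ne, count_affine_ne, count_affine_ne, hF]
    rcases eq_or_ne (a 0) 0 with h0 | h0 <;> rcases eq_or_ne (a 1) 0 with h1 | h1 <;>
      rcases eq_or_ne (a 2) 0 with h2 | h2 <;>
      simp [h0, h1, h2] <;> decide


theorem finrank_ker_of_ne {v : ℕ} (f : Module.Dual F (Fin v → F)) (hf : f ≠ 0) :
    finrank F (LinearMap.ker f) = v - 1 := by
  have hfr : finrank F (Fin v → F) = v := by simp [Module.finrank_pi]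
  have hex : ∃ x, f x ≠ 0 := by
    by_contra hco
    push_neg at hco
    exact hf (LinearMap.ext fun y => by simp [hco y])
  rcases hex with ⟨x, hx⟩
  have hrange : LinearMap.range f = ⊤ := by
    rw [Submodule.eq_top_iff']
    intro c
    exact ⟨(c / f x) • x, by simp [div_mul_cancel₀, hx]⟩
  have := f.finrank_range_add_finrank_ker
  rw [hrange, finrank_top, hfr, Module.finrank_self] at this
  omega

/-- A nonzero vector generating a point. -/
theorem exists_gen {v : ℕ} (P : PGPoint F v) :
    ∃ x : Fin v → F, x ≠ 0 ∧ P.1 = Submodule.span F {x} := by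
  have hbot : P.1 ≠ ⊥ := by
    intro h
    have := P.2
    rw [h] at this
    simp at this
  obtain ⟨x, hxP, hx0⟩ := Submodule.exists_mem_ne_zero_of_ne_bot hbot
  refine ⟨x, hx0, ?_⟩
  have hle : Submodule.span F {x} ≤ P.1 := by
    rw [Submodule.span_le]
    intro y hy
    rcases Set.mem_singleton_iff.1 hy with rfl
    exact hxP
  exact (Submodule.eq_of_le_of_finrank_eq hle
    (by rw [finrank_span_singleton hx0, P.2])).symm

/-- Avoiding at most 3 proper subspaces. -/
theorem exists_avoid {M : Type} [AddCommGroup M] [Module F M] [Finite M]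
    [Module.Finite F M]
    (hF : Fintype.card F = 4) (U : Submodule F M) {ι : Type} (s : Finset ι)
    (W : ι → Submodule F M) (hW : ∀ i ∈ s, W i < U) (hs : s.card ≤ 3) :
    ∃ u ∈ U, ∀ i ∈ s, u ∉ W i := by
  haveI : Fintype M := Fintype.ofFinite M
  rcases s.eq_empty_or_nonempty with rfl | ⟨i0, hi0⟩
  · exact ⟨0, U.zero_mem, by simp⟩
  by_contra hco
  push_neg at hco
  have cardsub : ∀ W' : Submodule F M,
      (W' : Set M).toFinset.card = Fintype.card F ^ finrank F W' := by
    intro W'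
    rw [Set.toFinset_card]
    rw [Fintype.card_congr
      ((Equiv.subtypeEquivRight (fun x => Iff.rfl)) : ↑(W' : Set M) ≃ ↥W')]
    exact card_eq_pow_finrank
  have hsub : (U : Set M).toFinset ⊆ s.biUnion (fun i => (W i : Set M).toFinset) := by
    intro u hu
    rw [Set.mem_toFinset] at hu
    obtain ⟨i, his, hiW⟩ := hco u hu
    exact Finset.mem_biUnion.2 ⟨i, his, Set.mem_toFinset.2 hiW⟩
  have hcard := Finset.card_le_card hsub
  have hd : 1 ≤ finrank F U := by
    have := Submodule.finrank_lt_finrank_of_lt (hW i0 hi0)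
    omega
  have hWcard : ∀ i ∈ s, ((W i : Set M).toFinset.card) ≤ Fintype.card F ^ (finrank F U - 1) := by
    intro i hi
    rw [cardsub]
    apply Nat.pow_le_pow_right (by rw [hF]; norm_num)
    have := Submodule.finrank_lt_finrank_of_lt (hW i hi)
    omega
  have hsum : (s.biUnion (fun i => (W i : Set M).toFinset)).card
      ≤ 3 * Fintype.card F ^ (finrank F U - 1) := by
    calc (s.biUnion (fun i => (W i : Set M).toFinset)).card
        ≤ ∑ i ∈ s, ((W i : Set M).toFinset).card := Finset.card_biUnion_le
      _ ≤ ∑ _i ∈ s, Fintype.card F ^ (finrank F U - 1) := Finset.sum_le_sum hWcard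
      _ = s.card * Fintype.card F ^ (finrank F U - 1) := by rw [Finset.sum_const, smul_eq_mul]
      _ ≤ 3 * Fintype.card F ^ (finrank F U - 1) := by
          apply Nat.mul_le_mul_right _ hs
  rw [cardsub] at hcard
  have hfin : Fintype.card F ^ finrank F U ≤ 3 * Fintype.card F ^ (finrank F U - 1) :=
    le_trans hcard hsum
  rw [hF] at hfin
  have hpow : (4:ℕ) ^ finrank F U = 4 * 4 ^ (finrank F U - 1) := by
    conv_lhs => rw [show finrank F U = 1 + (finrank F U - 1) by omega]
    rw [pow_add, pow_one]
  rw [hpow] at hfin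
  have hp : 0 < (4:ℕ) ^ (finrank F U - 1) := Nat.pow_pos (by norm_num)
  omega

theorem no_small {v n : ℕ} (hF : Fintype.card F = 4) (hn1 : 1 ≤ n) (hn4 : n ≤ 4)
    (S : Set (PGPoint F v)) (hdiv : IsDivisibleSet F 2 S) (hcard : S.ncard = n) : False := by
  classical
  -- choose generators
  choose ξ hξ0 hξspan using fun P : PGPoint F v => exists_gen F P
  have hSfin : S.Finite := Set.toFinite S
  set sf := hSfin.toFinset with hsf
  have hsfcard : sf.card = n := by
    rw [hsf, ← Set.ncard_eq_toFinset_card _ hSfin, hcard]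
  have hSne : S.Nonempty := by
    apply Set.nonempty_of_ncard_ne_zero
    omega
  obtain ⟨P1, hP1⟩ := hSne
  -- the dual module
  set M := Module.Dual F (Fin v → F) with hM
  haveI hMfin : Finite M :=
    Finite.of_injective (fun f : M => (f : (Fin v → F) → F)) DFunLike.coe_injective
  set A : (Fin v → F) → Submodule F M :=
    fun x => LinearMap.ker (Module.Dual.eval F (Fin v → F) x) with hA
  have hmem_iff : ∀ (x : Fin v → F) (f : M), f ∈ A x ↔ f x = 0 := by
    intro x f
    rw [hA]
    rw [LinearMap.mem_ker, Module.Dual.eval_apply]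
  have hAlt : ∀ x : Fin v → F, x ≠ 0 → A x < ⊤ := by
    intro x hx
    rw [lt_top_iff_ne_top]
    intro h
    apply hx
    rw [← Module.forall_dual_apply_eq_zero_iff (R := F)]
    intro f
    exact (hmem_iff x f).1 (h ▸ Submodule.mem_top)
  have hPle : ∀ (P : PGPoint F v) (f : M), (P.1 ≤ LinearMap.ker f) ↔ f (ξ P) = 0 := by
    intro P f
    constructor
    · intro h
      have : ξ P ∈ LinearMap.ker f :=
        h (by rw [hξspan P]; exact Submodule.mem_span_singleton_self _)
      simpa using this
    · intro h
      rw [hξspan P, Submodule.span_le]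
      intro y hy
      rcases Set.mem_singleton_iff.1 hy with rfl
      simpa using h
  rcases Nat.even_or_odd n with heven | hodd
  · -- even: find f vanishing exactly on P1
    have h2n : 2 ≤ n := by
      rcases heven with ⟨k, hk⟩; omega
    obtain ⟨P2, hP2S, hP2ne⟩ := Set.exists_ne_of_one_lt_ncard (s := S) (by omega) P1
    have hWlt : ∀ P ∈ sf.erase P1, A (ξ P1) ⊓ A (ξ P) < A (ξ P1) := by
      intro P hP
      rcases Finset.mem_erase.1 hP with ⟨hPne, hPS⟩
      have hnm : ξ P ∉ P1.1 := by
        intro hmem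
        apply hPne
        apply Subtype.ext
        apply Submodule.eq_of_le_of_finrank_eq
        · rw [hξspan P, Submodule.span_le]
          intro y hy
          rcases Set.mem_singleton_iff.1 hy with rfl
          exact hmem
        · rw [P.2, P1.2]
      obtain ⟨f0, hf0ne, hf0map⟩ :=
        Submodule.exists_dual_map_eq_bot_of_notMem hnm inferInstance
      have hf0P1 : f0 (ξ P1) = 0 := by
        have hmm : f0 (ξ P1) ∈ Submodule.map f0 P1.1 :=
          Submodule.mem_map_of_mem
            (by conv_lhs => rw [hξspan P1]
                exact Submodule.mem_span_singleton_self _)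
        rw [hf0map] at hmm
        exact (Submodule.mem_bot F).1 hmm
      rw [SetLike.lt_iff_le_and_exists]
      refine ⟨inf_le_left, f0, (hmem_iff _ _).2 hf0P1, ?_⟩
      intro hmem2
      exact hf0ne ((hmem_iff _ f0).1 hmem2.2)
    obtain ⟨f, hfU, hfav⟩ := exists_avoid F hF (A (ξ P1)) (sf.erase P1)
      (fun P => A (ξ P1) ⊓ A (ξ P)) hWlt
      (by rw [Finset.card_erase_of_mem (hSfin.mem_toFinset.2 hP1), hsfcard]; omega)
    have hfP1 : f (ξ P1) = 0 := (hmem_iff _ _).1 hfU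
    have hfothers : ∀ P ∈ S, P ≠ P1 → f (ξ P) ≠ 0 := by
      intro P hPS hPne h0
      exact hfav P (Finset.mem_erase.2 ⟨hPne, hSfin.mem_toFinset.2 hPS⟩)
        ⟨hfU, (hmem_iff _ _).2 h0⟩
    have hfne : f ≠ 0 := by
      intro h0
      exact hfothers P2 hP2S hP2ne (by rw [h0]; rfl)
    have hker : finrank F (LinearMap.ker f) = v - 1 := finrank_ker_of_ne F f hfne
    have hdiv' := hdiv (LinearMap.ker f) hker
    have hint : S ∩ {P : PGPoint F v | P.1 ≤ LinearMap.ker f} = {P1} := by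
      ext P
      simp only [Set.mem_inter_iff, Set.mem_setOf_eq, Set.mem_singleton_iff]
      constructor
      · rintro ⟨hPS, hPH⟩
        by_contra hne
        exact hfothers P hPS hne ((hPle P f).1 hPH)
      · rintro rfl
        exact ⟨hP1, (hPle _ f).2 hfP1⟩
    rw [hint, hcard, Set.ncard_singleton] at hdiv'
    have hmod : n % 2 = 1 % 2 := hdiv'
    rcases heven with ⟨k, hk⟩
    omega
  · -- odd case: find f vanishing nowhere on S
    obtain ⟨f, -, hfav⟩ := exists_avoid F hF ⊤ sf (fun P => A (ξ P))
      (fun P _ => hAlt _ (hξ0 P))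
      (by rw [hsfcard]; rcases hodd with ⟨k, hk⟩; omega)
    have hfP : ∀ P ∈ S, f (ξ P) ≠ 0 := fun P hPS h0 =>
      hfav P (hSfin.mem_toFinset.2 hPS) ((hmem_iff _ _).2 h0)
    have hfne : f ≠ 0 := by
      intro h0
      exact hfP P1 hP1 (by rw [h0]; rfl)
    have hker : finrank F (LinearMap.ker f) = v - 1 := finrank_ker_of_ne F f hfne
    have hdiv' := hdiv (LinearMap.ker f) hker
    have hint : S ∩ {P : PGPoint F v | P.1 ≤ LinearMap.ker f} = ∅ := by
      ext P
      simp only [Set.mem_inter_iff, Set.mem_setOf_eq, Set.mem_empty_iff_false, iff_false, not_and]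
      intro hPS hPH
      exact hfP P hPS ((hPle P f).1 hPH)
    rw [hint, hcard, Set.ncard_empty] at hdiv'
    have hmod : n % 2 = 0 % 2 := hdiv'
    rcases hodd with ⟨k, hk⟩
    omega


theorem hasCfg_ge (hF : Fintype.card F = 4) : ∀ n, 5 ≤ n → HasCfg F n := by
  intro n
  induction n using Nat.strong_induction_on with
  | _ n ih =>
    intro hn
    by_cases h9 : n ≤ 9
    · interval_cases n
      · exact hasCfg_five F hF
      · exact hasCfg_six F hF
      · exact hasCfg_seven F hF
      · exact hasCfg_eight F hF
      · exact hasCfg_nine F hF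
    · push_neg at h9
      have h1 : n - 5 < n := by omega
      have h2 : 5 ≤ n - 5 := by omega
      have h3 := hasCfg_add F (ih (n - 5) h1 h2) (hasCfg_five F hF)
      rwa [Nat.sub_add_cancel (by omega)] at h3


/-- For `n ≥ 1`, a dimension `v` and a `2`-divisible set of points `S` in
`PG(v-1,4)` with `|S| = n` exist iff `n ≥ 5`. -/
theorem stmt_10 (hF : Fintype.card F = 4) (n : ℕ) (hn : 1 ≤ n) :
    (∃ (v : ℕ) (S : Set (PGPoint F v)), IsDivisibleSet F 2 S ∧ S.ncard = n) ↔ 5 ≤ n := by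
  constructor
  · rintro ⟨v, S, hdiv, hcard⟩
    by_contra h5
    push_neg at h5
    exact no_small F hF hn (by omega) S hdiv hcard
  · intro h5
    obtain ⟨v, ι, inst, x, hv, hcard, hc⟩ := hasCfg_ge F hF n h5
    obtain ⟨S, hS1, hS2⟩ := cfg_to_set F hv x hc hcard
    exact ⟨v, S, hS1, hS2⟩

end
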